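/- With the setup of the standard compactification of (ℝˢ, d_E), every Cauchy sequence in (ℝˢ, d^φ) that is not equivalent to a constant Cauchy sequence is equivalent to the sequence (aᵢ·x)ᵢ for some unit vector x (two Cauchy sequences (xᵢ), (yᵢ) being equivalent iff d^φ(xᵢ,yᵢ) → 0). -/

import Mathlib

noncomputable def deltaPhi {X : Type*} [MetricSpace X] (m : X) (φ : X → X → ℝ) (x y : X) : ℝ :=
  min (dist x y) (1 / (1 + dist m x) + φ x y + 1 / (1 + dist m y))

noncomputable def dPhi {X : Type*} [MetricSpace X] (m : X) (φ : X → X → ℝ) (x y : X) : ℝ :=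
  sInf { r : ℝ | ∃ (n : ℕ) (f : ℕ → X), 1 ≤ n ∧ f 0 = x ∧ f n = y ∧
    r = ∑ i ∈ Finset.range n, deltaPhi m φ (f i) (f (i + 1)) }

/-- aₘ = 1 + 1/2 + ⋯ + 1/m. -/
noncomputable def harm (m : ℕ) : ℝ := ∑ k ∈ Finset.range m, (1 : ℝ) / (k + 1)

-- The function φ for the standard compactification of ℝˢ:
-- φ(x,y) = 0 if y = (a_q/a_p) x for some p,q ≥ 1; φ(x,y) = (1/aₘ)|x−y| if x,y
-- lie on the sphere Sₘ of radius aₘ (note ‖x‖ = aₘ there); |x−y| otherwise.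
open Classical in
noncomputable def phiStd (s : ℕ) (x y : EuclideanSpace ℝ (Fin s)) : ℝ :=
  if ∃ p q : ℕ, 1 ≤ p ∧ 1 ≤ q ∧ y = (harm q / harm p) • x then 0
  else if ∃ m : ℕ, 1 ≤ m ∧ ‖x‖ = harm m ∧ ‖y‖ = harm m then (1 / ‖x‖) * ‖x - y‖
  else ‖x - y‖

namespace StdCpt

set_option linter.unusedSectionVars false


variable {V : Type*} [NormedAddCommGroup V] [NormedSpace ℝ V]

noncomputable def Phi (x : V) : V := (1 + ‖x‖)⁻¹ • x

lemma onp (x : V) : (0:ℝ) < 1 + ‖x‖ := by positivity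

lemma norm_Phi (x : V) : ‖Phi x‖ = ‖x‖ / (1 + ‖x‖) := by
  rw [Phi, norm_smul, norm_inv, Real.norm_of_nonneg (onp x).le, inv_mul_eq_div]

lemma norm_Phi_lt_one (x : V) : ‖Phi x‖ < 1 := by
  rw [norm_Phi]
  rw [div_lt_one (onp x)]
  linarith

lemma one_sub_norm_Phi (x : V) : 1 - ‖Phi x‖ = 1 / (1 + ‖x‖) := by
  rw [norm_Phi]
  field_simp
  ring

lemma smul_Phi (x : V) : (1 + ‖x‖) • Phi x = x := by
  rw [Phi, smul_smul, mul_inv_cancel₀ (onp x).ne', one_smul]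

/-- Lipschitz bound -/
lemma Phi_lip (x y : V) : ‖Phi x - Phi y‖ ≤ 2 * ‖x - y‖ := by
  set a := 1 + ‖x‖ with ha
  set b := 1 + ‖y‖ with hb
  have hae : (0:ℝ) < a := onp x
  have hbe : (0:ℝ) < b := onp y
  have key : Phi x - Phi y = (a * b)⁻¹ • ((x - y) + (‖y‖ • x - ‖x‖ • y)) := by
    have : (x - y) + (‖y‖ • x - ‖x‖ • y) = b • x - a • y := by
      rw [hb, ha, add_smul, add_smul, one_smul, one_smul]; abel
    rw [this, Phi, Phi, smul_sub, smul_smul, smul_smul]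
    rw [mul_inv, inv_mul_cancel_right₀ hbe.ne', mul_comm a⁻¹ b⁻¹, inv_mul_cancel_right₀ hae.ne']
  have h1 : ‖‖y‖ • x - ‖x‖ • y‖ ≤ 2 * ‖y‖ * ‖x - y‖ := by
    have : ‖y‖ • x - ‖x‖ • y = ‖y‖ • (x - y) + (‖y‖ - ‖x‖) • y := by
      rw [smul_sub, sub_smul]; abel
    rw [this]
    calc ‖‖y‖ • (x - y) + (‖y‖ - ‖x‖) • y‖ ≤ ‖‖y‖ • (x - y)‖ + ‖(‖y‖ - ‖x‖) • y‖ :=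
          norm_add_le _ _
      _ ≤ ‖y‖ * ‖x - y‖ + ‖x - y‖ * ‖y‖ := by
          rw [norm_smul, norm_smul, Real.norm_of_nonneg (norm_nonneg y)]
          gcongr
          calc ‖(‖y‖ - ‖x‖ : ℝ)‖ = |‖y‖ - ‖x‖| := Real.norm_eq_abs _
            _ ≤ ‖y - x‖ := abs_norm_sub_norm_le y x
            _ = ‖x - y‖ := norm_sub_rev y x
      _ = 2 * ‖y‖ * ‖x - y‖ := by ring
  rw [key, norm_smul, norm_inv, Real.norm_of_nonneg (by positivity : (0:ℝ) ≤ a * b)]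
  have h2 : ‖(x - y) + (‖y‖ • x - ‖x‖ • y)‖ ≤ ‖x - y‖ + 2 * ‖y‖ * ‖x - y‖ :=
    le_trans (norm_add_le _ _) (by linarith)
  rw [inv_mul_le_iff₀ (by positivity)]
  have hy : (0:ℝ) ≤ ‖y‖ := norm_nonneg y
  have hx : (0:ℝ) ≤ ‖x‖ := norm_nonneg x
  have hxy : (0:ℝ) ≤ ‖x - y‖ := norm_nonneg _
  have ha1 : a = 1 + ‖x‖ := ha
  have hb1 : b = 1 + ‖y‖ := hb
  rw [ha1, hb1]
  nlinarith [mul_nonneg (mul_nonneg hx hy) hxy, mul_nonneg hx hxy, mul_nonneg hy hxy]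

/-- reverse Lipschitz bound -/
lemma Phi_rev (x y : V) : ‖x - y‖ ≤ 3 * ((1 + ‖x‖) * (1 + ‖y‖)) * ‖Phi x - Phi y‖ := by
  set w := Phi x
  set v := Phi y
  have hw1 : ‖w‖ < 1 := norm_Phi_lt_one x
  have hv1 : ‖v‖ < 1 := norm_Phi_lt_one y
  have hxw : x = (1 + ‖x‖) • w := (smul_Phi x).symm
  have hyv : y = (1 + ‖y‖) • v := (smul_Phi y).symm
  have hw : (1 + ‖x‖) * (1 - ‖w‖) = 1 := by
    have := one_sub_norm_Phi x
    rw [this]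
    field_simp
  have hv : (1 + ‖y‖) * (1 - ‖v‖) = 1 := by
    rw [one_sub_norm_Phi y]; field_simp
  have key : x - y = ((1 + ‖x‖) * (1 + ‖y‖)) • ((1 - ‖v‖) • w - (1 - ‖w‖) • v) := by
    rw [smul_sub, smul_smul, smul_smul]
    nth_rewrite 1 [hxw]; nth_rewrite 1 [hyv]
    congr 1
    · congr 1
      rw [mul_assoc, hv, mul_one]
    · congr 1
      rw [mul_comm (1 + ‖x‖), mul_assoc, hw, mul_one]
  have hinner : ‖(1 - ‖v‖) • w - (1 - ‖w‖) • v‖ ≤ 3 * ‖w - v‖ := by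
    have heq : (1 - ‖v‖) • w - (1 - ‖w‖) • v
        = (w - v) - (‖v‖ • (w - v) + (‖v‖ - ‖w‖) • v) := by
      rw [smul_sub, sub_smul]
      module
    rw [heq]
    have h3 : ‖‖v‖ • (w - v) + (‖v‖ - ‖w‖) • v‖ ≤ ‖v‖ * ‖w - v‖ + ‖w - v‖ * ‖v‖ := by
      refine le_trans (norm_add_le _ _) ?_
      rw [norm_smul, norm_smul, Real.norm_of_nonneg (norm_nonneg v)]
      gcongr
      calc ‖(‖v‖ - ‖w‖ : ℝ)‖ = |‖v‖ - ‖w‖| := Real.norm_eq_abs _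
        _ ≤ ‖v - w‖ := abs_norm_sub_norm_le v w
        _ = ‖w - v‖ := norm_sub_rev v w
    refine le_trans (norm_sub_le _ _) ?_
    have hv0 : (0:ℝ) ≤ ‖v‖ := norm_nonneg v
    have hwv : (0:ℝ) ≤ ‖w - v‖ := norm_nonneg _
    nlinarith
  calc ‖x - y‖ = ((1 + ‖x‖) * (1 + ‖y‖)) * ‖(1 - ‖v‖) • w - (1 - ‖w‖) • v‖ := by
        rw [key, norm_smul, Real.norm_of_nonneg (by positivity)]
    _ ≤ ((1 + ‖x‖) * (1 + ‖y‖)) * (3 * ‖w - v‖) := by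
        apply mul_le_mul_of_nonneg_left hinner (by positivity)
    _ = 3 * ((1 + ‖x‖) * (1 + ‖y‖)) * ‖w - v‖ := by ring




/-- difference of unit vectors bound -/
lemma unit_sub_le (x y : V) (hx : x ≠ 0) (hy : y ≠ 0) :
    ‖‖x‖⁻¹ • x - ‖y‖⁻¹ • y‖ ≤ 2 * ‖x - y‖ / ‖x‖ := by
  have hx0 : (0:ℝ) < ‖x‖ := norm_pos_iff.mpr hx
  have hy0 : (0:ℝ) < ‖y‖ := norm_pos_iff.mpr hy
  have key : ‖x‖⁻¹ • x - ‖y‖⁻¹ • y = ‖x‖⁻¹ • (x - y) + (‖x‖⁻¹ - ‖y‖⁻¹) • y := by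
    rw [smul_sub, sub_smul]; abel
  have h1 : ‖‖x‖⁻¹ • (x - y)‖ = ‖x - y‖ / ‖x‖ := by
    rw [norm_smul, norm_inv, Real.norm_of_nonneg hx0.le, inv_mul_eq_div]
  have h2 : ‖(‖x‖⁻¹ - ‖y‖⁻¹) • y‖ ≤ ‖x - y‖ / ‖x‖ := by
    rw [norm_smul, Real.norm_eq_abs]
    have heq : ‖x‖⁻¹ - ‖y‖⁻¹ = (‖y‖ - ‖x‖) / (‖x‖ * ‖y‖) := by field_simp
    rw [heq, abs_div, abs_of_pos (by positivity : (0:ℝ) < ‖x‖ * ‖y‖)]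
    have h3 : |‖y‖ - ‖x‖| ≤ ‖x - y‖ := by
      rw [show ‖x - y‖ = ‖y - x‖ from norm_sub_rev x y]
      exact abs_norm_sub_norm_le y x
    have h4 : |‖y‖ - ‖x‖| / (‖x‖ * ‖y‖) * ‖y‖ = |‖y‖ - ‖x‖| / ‖x‖ := by
      field_simp
    rw [h4]
    gcongr
  calc ‖‖x‖⁻¹ • x - ‖y‖⁻¹ • y‖ ≤ ‖‖x‖⁻¹ • (x - y)‖ + ‖(‖x‖⁻¹ - ‖y‖⁻¹) • y‖ := by
        rw [key]; exact norm_add_le _ _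
    _ ≤ ‖x - y‖ / ‖x‖ + ‖x - y‖ / ‖x‖ := by rw [h1]; linarith
    _ = 2 * ‖x - y‖ / ‖x‖ := by ring


section harmsec

open Filter

lemma harm_succ (m : ℕ) : harm (m + 1) = harm m + 1 / (m + 1) := Finset.sum_range_succ _ m

lemma harm_one : harm 1 = 1 := by simp [harm]

lemma harm_mono : Monotone harm := by
  apply monotone_nat_of_le_succ
  intro n
  rw [harm_succ]
  have : (0:ℝ) < 1 / (n + 1) := by positivity
  linarith

lemma one_le_harm {m : ℕ} (hm : 1 ≤ m) : 1 ≤ harm m := by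
  have := harm_mono hm
  rwa [harm_one] at this

lemma harm_pos {m : ℕ} (hm : 1 ≤ m) : 0 < harm m := lt_of_lt_of_le one_pos (one_le_harm hm)

lemma harm_tendsto : Tendsto harm atTop atTop := by
  exact Real.tendsto_sum_range_one_div_nat_succ_atTop

lemma harm_unbounded (M : ℝ) : ∃ p : ℕ, 1 ≤ p ∧ M < harm p := by
  have h := (harm_tendsto.eventually_gt_atTop M).and (eventually_ge_atTop 1)
  obtain ⟨p, hp1, hp2⟩ := h.exists
  exact ⟨p, hp2, hp1⟩

lemma exists_harm_near (T : ℝ) (hT : 1 ≤ T) : ∃ q : ℕ, 1 ≤ q ∧ harm q ≤ T ∧ T < harm q + 1 := by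
  have hex : ∃ n, T < harm n := by
    obtain ⟨p, _, hp⟩ := harm_unbounded T
    exact ⟨p, hp⟩
  classical
  set n := Nat.find hex with hn
  have hspec : T < harm n := Nat.find_spec hex
  match hk : n, hspec with
  | 0, hspec => exact absurd hspec (by simp [harm]; linarith)
  | (k+1), hspec =>
    have hk' : ¬ T < harm k := Nat.find_min hex (by omega)
    push_neg at hk'
    have hk1 : 1 ≤ k := by
      by_contra h
      have : k = 0 := by omega
      subst this
      simp [harm] at hk'
      rw [show (0:ℕ)+1 = 1 from rfl, harm_one] at hspec
      linarith
    refine ⟨k, hk1, hk', ?_⟩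
    have : harm (k+1) ≤ harm k + 1 := by
      rw [harm_succ]
      have : (1:ℝ) / (k+1) ≤ 1 := by
        rw [div_le_one (by positivity)]
        norm_num
      linarith
    linarith

lemma exists_ratio_close (R : ℝ) (hR : 0 < R) (δ : ℝ) (hδ : 0 < δ) (m : ℕ) (hm : 1 ≤ m) :
    ∃ p q : ℕ, 1 ≤ p ∧ 1 ≤ q ∧ |harm q / harm p * R - harm m| < δ := by
  obtain ⟨p, hp1, hpM⟩ := harm_unbounded (max (R / δ) R)
  have hpR : R < harm p := lt_of_le_of_lt (le_max_right _ _) hpM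
  have hpδ : R / δ < harm p := lt_of_le_of_lt (le_max_left _ _) hpM
  have hppos : 0 < harm p := harm_pos hp1
  set T := harm p * harm m / R with hTdef
  have hT1 : 1 ≤ T := by
    rw [hTdef, le_div_iff₀ hR, one_mul]
    calc R ≤ harm p := hpR.le
      _ = harm p * 1 := (mul_one _).symm
      _ ≤ harm p * harm m := by
          apply mul_le_mul_of_nonneg_left (one_le_harm hm) hppos.le
  obtain ⟨q, hq1, hqle, hqlt⟩ := exists_harm_near T hT1
  refine ⟨p, q, hp1, hq1, ?_⟩
  have key : harm q / harm p * R - harm m = (harm q - T) * (R / harm p) := by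
    rw [hTdef]
    field_simp
  rw [key, abs_mul]
  have h1 : |harm q - T| < 1 := by
    rw [abs_lt]
    constructor <;> linarith
  have h2 : |R / harm p| = R / harm p := abs_of_pos (by positivity)
  rw [h2]
  have h3 : R / harm p < δ := by
    rw [div_lt_iff₀ hppos]
    have h4 : R / δ * δ < harm p * δ := mul_lt_mul_of_pos_right hpδ hδ
    rw [div_mul_cancel₀ _ hδ.ne'] at h4
    rw [mul_comm]
    linarith
  calc |harm q - T| * (R / harm p) ≤ 1 * (R / harm p) := by
        apply mul_le_mul_of_nonneg_right h1.le (by positivity)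
    _ = R / harm p := one_mul _
    _ < δ := h3


end harmsec

section chains


set_option linter.unusedSectionVars false

variable {X : Type*} [MetricSpace X] (m : X) (φ : X → X → ℝ) (hφ : ∀ a b, 0 ≤ φ a b)

include hφ

lemma deltaPhi_nonneg (x y : X) : 0 ≤ deltaPhi m φ x y := by
  apply le_min dist_nonneg
  have h1 : (0:ℝ) ≤ 1 / (1 + dist m x) := by positivity
  have h2 : (0:ℝ) ≤ 1 / (1 + dist m y) := by positivity
  have h3 := hφ x y
  linarith

lemma deltaPhi_le_dist (x y : X) : deltaPhi m φ x y ≤ dist x y := min_le_left _ _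

lemma deltaPhi_le_jump (x y : X) :
    deltaPhi m φ x y ≤ 1 / (1 + dist m x) + φ x y + 1 / (1 + dist m y) := min_le_right _ _

lemma dPhi_bddBelow (x y : X) : BddBelow { r : ℝ | ∃ (n : ℕ) (f : ℕ → X), 1 ≤ n ∧ f 0 = x ∧
    f n = y ∧ r = ∑ i ∈ Finset.range n, deltaPhi m φ (f i) (f (i + 1)) } := by
  refine ⟨0, ?_⟩
  rintro r ⟨n, f, hn, h0, h1, rfl⟩
  exact Finset.sum_nonneg fun i _ => deltaPhi_nonneg m φ hφ _ _

lemma dPhi_nonempty (x y : X) : Set.Nonempty { r : ℝ | ∃ (n : ℕ) (f : ℕ → X), 1 ≤ n ∧ f 0 = x ∧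
    f n = y ∧ r = ∑ i ∈ Finset.range n, deltaPhi m φ (f i) (f (i + 1)) } := by
  refine ⟨deltaPhi m φ x y, 1, fun i => if i = 0 then x else y, le_refl 1, if_pos rfl,
    if_neg one_ne_zero, ?_⟩
  rw [Finset.sum_range_one]
  norm_num

lemma dPhi_le_chain (x y : X) (n : ℕ) (f : ℕ → X) (hn : 1 ≤ n) (h0 : f 0 = x) (h1 : f n = y) :
    dPhi m φ x y ≤ ∑ i ∈ Finset.range n, deltaPhi m φ (f i) (f (i + 1)) :=
  csInf_le (dPhi_bddBelow m φ hφ x y) ⟨n, f, hn, h0, h1, rfl⟩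

lemma dPhi_le_deltaPhi (x y : X) : dPhi m φ x y ≤ deltaPhi m φ x y := by
  have := dPhi_le_chain m φ hφ x y 1 (fun i => if i = 0 then x else y) (le_refl 1) (if_pos rfl)
    (if_neg one_ne_zero)
  rw [Finset.sum_range_one] at this
  norm_num at this
  exact this

lemma dPhi_le_dist (x y : X) : dPhi m φ x y ≤ dist x y :=
  le_trans (dPhi_le_deltaPhi m φ hφ x y) (deltaPhi_le_dist m φ hφ x y)

lemma dPhi_nonneg (x y : X) : 0 ≤ dPhi m φ x y := by
  apply le_csInf (dPhi_nonempty m φ hφ x y)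
  rintro r ⟨n, f, hn, h0, h1, rfl⟩
  exact Finset.sum_nonneg fun i _ => deltaPhi_nonneg m φ hφ _ _

/-- Generic lower bound: chains dominate any function dominated by deltaPhi. -/
lemma dPhi_lower {Y : Type*} [PseudoMetricSpace Y] {g : X → Y} {C : ℝ} (hC : 0 < C)
    (hg : ∀ a b : X, dist (g a) (g b) ≤ C * deltaPhi m φ a b) (x y : X) :
    dist (g x) (g y) ≤ C * dPhi m φ x y := by
  rw [mul_comm, ← div_le_iff₀ hC]
  apply le_csInf (dPhi_nonempty m φ hφ x y)
  rintro r ⟨n, f, h0, h1, h2, rfl⟩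
  rw [div_le_iff₀ hC, mul_comm]
  calc dist (g x) (g y) = dist (g (f 0)) (g (f n)) := by rw [h1, h2]
    _ ≤ ∑ i ∈ Finset.range n, dist (g (f i)) (g (f (i + 1))) :=
        dist_le_range_sum_dist (fun i => g (f i)) n
    _ ≤ ∑ i ∈ Finset.range n, C * deltaPhi m φ (f i) (f (i + 1)) :=
        Finset.sum_le_sum fun i _ => hg _ _
    _ = C * ∑ i ∈ Finset.range n, deltaPhi m φ (f i) (f (i + 1)) := by
        rw [Finset.mul_sum]


end chains


section phistd

lemma phiStd_nonneg (s : ℕ) (x y : EuclideanSpace ℝ (Fin s)) : 0 ≤ phiStd s x y := by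
  unfold phiStd
  split_ifs
  · exact le_refl 0
  · positivity
  · exact norm_nonneg _

variable {V : Type*} [NormedAddCommGroup V] [NormedSpace ℝ V]

lemma Phi_sub_unit (x : V) (hx : x ≠ 0) : ‖Phi x - ‖x‖⁻¹ • x‖ = 1 / (1 + ‖x‖) := by
  have hx0 : (0:ℝ) < ‖x‖ := norm_pos_iff.mpr hx
  have key : Phi x - ‖x‖⁻¹ • x = ((1 + ‖x‖)⁻¹ - ‖x‖⁻¹) • x := by rw [Phi, sub_smul]
  rw [key, norm_smul, Real.norm_eq_abs]
  have h2 : (1 + ‖x‖)⁻¹ - ‖x‖⁻¹ = -(1 / ((1 + ‖x‖) * ‖x‖)) := by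
    rw [neg_eq_iff_eq_neg.symm]
    field_simp
    ring
  rw [h2, abs_neg, abs_of_pos (by positivity : (0:ℝ) < 1 / ((1 + ‖x‖) * ‖x‖))]
  field_simp

lemma norm_Phi_sub_le (s : ℕ) (x y : EuclideanSpace ℝ (Fin s)) :
    ‖Phi x - Phi y‖ ≤ 2 * deltaPhi 0 (phiStd s) x y := by
  have hA : ‖Phi x - Phi y‖ ≤ 2 * dist x y := by
    rw [dist_eq_norm]
    exact Phi_lip x y
  have hB : ‖Phi x - Phi y‖
      ≤ 2 * (1 / (1 + dist 0 x) + phiStd s x y + 1 / (1 + dist 0 y)) := by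
    simp only [dist_zero_left]
    by_cases hbig : 1 ≤ 1 / (1 + ‖x‖) + 1 / (1 + ‖y‖)
    · have l1 := norm_Phi_lt_one x
      have l2 := norm_Phi_lt_one y
      have l3 := norm_sub_le (Phi x) (Phi y)
      have hp := phiStd_nonneg s x y
      linarith
    · push_neg at hbig
      have hx0 : x ≠ 0 := by
        rintro rfl
        rw [norm_zero] at hbig
        have : (0:ℝ) < 1 / (1 + ‖y‖) := by positivity
        norm_num at hbig
        linarith [norm_nonneg y]
      have hy0 : y ≠ 0 := by
        rintro rfl
        rw [norm_zero] at hbig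
        have : (0:ℝ) < 1 / (1 + ‖x‖) := by positivity
        norm_num at hbig
        linarith [norm_nonneg x]
      have hxu := Phi_sub_unit x hx0
      have hyu := Phi_sub_unit y hy0
      have htri : ‖Phi x - Phi y‖
          ≤ 1 / (1 + ‖x‖) + ‖‖x‖⁻¹ • x - ‖y‖⁻¹ • y‖ + 1 / (1 + ‖y‖) := by
        have h4 := dist_triangle4 (Phi x) (‖x‖⁻¹ • x) (‖y‖⁻¹ • y) (Phi y)
        simp only [dist_eq_norm] at h4
        rw [show ‖‖y‖⁻¹ • y - Phi y‖ = ‖Phi y - ‖y‖⁻¹ • y‖ from norm_sub_rev _ _] at h4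
        rw [hxu, hyu] at h4
        linarith
      have hdir : ‖‖x‖⁻¹ • x - ‖y‖⁻¹ • y‖ ≤ 2 * phiStd s x y
          + (1 / (1 + ‖x‖) + 1 / (1 + ‖y‖)) := by
        have hxn : (0:ℝ) < ‖x‖ := norm_pos_iff.mpr hx0
        have hyn : (0:ℝ) < ‖y‖ := norm_pos_iff.mpr hy0
        have hpos1 : (0:ℝ) < 1 / (1 + ‖x‖) := by positivity
        have hpos2 : (0:ℝ) < 1 / (1 + ‖y‖) := by positivity
        unfold phiStd
        split_ifs with h1 h2
        · obtain ⟨p, q, hp, hq, rfl⟩ := h1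
          set c := harm q / harm p with hc
          have hcp : 0 < c := div_pos (harm_pos hq) (harm_pos hp)
          have heq : ‖(c • x)‖⁻¹ • (c • x) = ‖x‖⁻¹ • x := by
            rw [norm_smul, Real.norm_eq_abs, abs_of_pos hcp, smul_smul, mul_inv]
            rw [mul_comm c⁻¹ ‖x‖⁻¹, mul_assoc, inv_mul_cancel₀ hcp.ne', mul_one]
          rw [heq, sub_self, norm_zero]
          linarith
        · obtain ⟨m, hm, hxm, hym⟩ := h2
          have heq : ‖x‖⁻¹ • x - ‖y‖⁻¹ • y = ‖x‖⁻¹ • (x - y) := by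
            rw [smul_sub]
            congr 2
            rw [hxm, hym]
          rw [heq, norm_smul, norm_inv, Real.norm_of_nonneg (norm_nonneg x)]
          have : ‖x‖⁻¹ * ‖x - y‖ = 1 / ‖x‖ * ‖x - y‖ := by rw [one_div]
          rw [this]
          have h5 : (0:ℝ) ≤ 1 / ‖x‖ * ‖x - y‖ := by positivity
          linarith
        · have hone : 1 ≤ ‖x‖ ∨ 1 ≤ ‖y‖ := by
            by_contra hcon
            push_neg at hcon
            obtain ⟨ha, hb'⟩ := hcon
            have e1 : (1:ℝ)/2 ≤ 1 / (1 + ‖x‖) := by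
              rw [le_div_iff₀ (onp x)]
              linarith
            have e2 : (1:ℝ)/2 ≤ 1 / (1 + ‖y‖) := by
              rw [le_div_iff₀ (onp y)]
              linarith
            linarith
        
          rcases hone with h | h
          · calc ‖‖x‖⁻¹ • x - ‖y‖⁻¹ • y‖ ≤ 2 * ‖x - y‖ / ‖x‖ := unit_sub_le x y hx0 hy0
              _ ≤ 2 * ‖x - y‖ := div_le_self (by positivity) h
              _ ≤ 2 * ‖x - y‖ + (1 / (1 + ‖x‖) + 1 / (1 + ‖y‖)) := by linarith
          · calc ‖‖x‖⁻¹ • x - ‖y‖⁻¹ • y‖ = ‖‖y‖⁻¹ • y - ‖x‖⁻¹ • x‖ := norm_sub_rev _ _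
              _ ≤ 2 * ‖y - x‖ / ‖y‖ := unit_sub_le y x hy0 hx0
              _ ≤ 2 * ‖y - x‖ := div_le_self (by positivity) h
              _ = 2 * ‖x - y‖ := by rw [norm_sub_rev]
              _ ≤ 2 * ‖x - y‖ + (1 / (1 + ‖x‖) + 1 / (1 + ‖y‖)) := by linarith
      linarith
  rcases min_cases (dist x y)
      (1 / (1 + dist 0 x) + phiStd s x y + 1 / (1 + dist 0 y)) with ⟨h, _⟩ | ⟨h, _⟩ <;>
    simp only [deltaPhi] <;> rw [h]
  · exact hA
  · exact hB

lemma Phi_dist_le_dPhi (s : ℕ) (x y : EuclideanSpace ℝ (Fin s)) :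
    dist (Phi x) (Phi y) ≤ 2 * dPhi 0 (phiStd s) x y :=
  dPhi_lower 0 (phiStd s) (phiStd_nonneg s) two_pos
    (fun a b => by rw [dist_eq_norm]; exact norm_Phi_sub_le s a b) x y

end phistd


section upper

lemma phiStd_ray (s : ℕ) (x : EuclideanSpace ℝ (Fin s)) (p q : ℕ) (hp : 1 ≤ p) (hq : 1 ≤ q) :
    phiStd s x ((harm q / harm p) • x) = 0 := by
  unfold phiStd
  split_ifs with h1 h2
  · rfl
  · exact absurd ⟨p, q, hp, hq, rfl⟩ h1
  · exact absurd ⟨p, q, hp, hq, rfl⟩ h1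

lemma phiStd_ray2 (s : ℕ) (x : EuclideanSpace ℝ (Fin s)) (p q : ℕ) (hp : 1 ≤ p) (hq : 1 ≤ q) :
    phiStd s ((harm q / harm p) • x) x = 0 := by
  have key : x = (harm p / harm q) • ((harm q / harm p) • x) := by
    rw [smul_smul]
    have : harm p / harm q * (harm q / harm p) = 1 := by
      have h1 : harm p ≠ 0 := (harm_pos hp).ne'
      have h2 : harm q ≠ 0 := (harm_pos hq).ne'
      field_simp
    rw [this, one_smul]
  unfold phiStd
  split_ifs with h1 h2
  · rfl
  · exact absurd ⟨q, p, hq, hp, key⟩ h1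
  · exact absurd ⟨q, p, hq, hp, key⟩ h1

lemma norm_sphere_pt (s : ℕ) (y : EuclideanSpace ℝ (Fin s)) (hy : y ≠ 0) {m : ℕ} (hm : 1 ≤ m) :
    ‖(harm m / ‖y‖) • y‖ = harm m := by
  have hyn : (0:ℝ) < ‖y‖ := norm_pos_iff.mpr hy
  have hmp : (0:ℝ) < harm m := harm_pos hm
  rw [norm_smul, Real.norm_eq_abs, abs_of_pos (div_pos hmp hyn)]
  field_simp

lemma phiStd_sphere_le (s : ℕ) (y z : EuclideanSpace ℝ (Fin s)) (hy : y ≠ 0) (hz : z ≠ 0)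
    {m : ℕ} (hm : 1 ≤ m) :
    phiStd s ((harm m / ‖y‖) • y) ((harm m / ‖z‖) • z)
      ≤ ‖‖y‖⁻¹ • y - ‖z‖⁻¹ • z‖ := by
  have hyn : (0:ℝ) < ‖y‖ := norm_pos_iff.mpr hy
  have hzn : (0:ℝ) < ‖z‖ := norm_pos_iff.mpr hz
  have hmp : (0:ℝ) < harm m := harm_pos hm
  have hy2 : (harm m / ‖y‖) • y = harm m • (‖y‖⁻¹ • y) := by
    rw [smul_smul, div_eq_mul_inv]
  have hz2 : (harm m / ‖z‖) • z = harm m • (‖z‖⁻¹ • z) := by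
    rw [smul_smul, div_eq_mul_inv]
  have hny2 := norm_sphere_pt s y hy hm
  have hnz2 := norm_sphere_pt s z hz hm
  unfold phiStd
  split_ifs with h1 h2
  · exact norm_nonneg _
  · rw [hny2, hy2, hz2, ← smul_sub, norm_smul, Real.norm_of_nonneg hmp.le]
    rw [one_div, ← mul_assoc, inv_mul_cancel₀ hmp.ne', one_mul]
  · exact absurd ⟨m, hm, hny2, hnz2⟩ h2

set_option maxHeartbeats 1000000 in
lemma dPhi_le_bound (s : ℕ) (y z : EuclideanSpace ℝ (Fin s)) (hy : y ≠ 0) (hz : z ≠ 0) :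
    dPhi 0 (phiStd s) y z
      ≤ 1 / (1 + ‖y‖) + 1 / (1 + ‖z‖) + ‖‖y‖⁻¹ • y - ‖z‖⁻¹ • z‖ := by
  have hphi := phiStd_nonneg s
  refine le_of_forall_pos_le_add ?_
  intro ε hε
  have hyn : (0:ℝ) < ‖y‖ := norm_pos_iff.mpr hy
  have hzn : (0:ℝ) < ‖z‖ := norm_pos_iff.mpr hz
  set δ := min 1 (ε / 8) with hδdef
  have hδ : 0 < δ := lt_min one_pos (by positivity)
  have hδ1 : δ ≤ 1 := min_le_left _ _
  have hδε : δ ≤ ε / 8 := min_le_right _ _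
  obtain ⟨m, hm1, hmB⟩ := harm_unbounded (8 / ε)
  have hmp : (0:ℝ) < harm m := harm_pos hm1
  have hm1' : (1:ℝ) ≤ harm m := one_le_harm hm1
  obtain ⟨p1, q1, hp1, hq1, habs1⟩ := exists_ratio_close ‖y‖ hyn δ hδ m hm1
  obtain ⟨p2, q2, hp2, hq2, habs2⟩ := exists_ratio_close ‖z‖ hzn δ hδ m hm1
  set lam := harm q1 / harm p1 with hlam
  set mu := harm q2 / harm p2 with hmu
  have hlam0 : 0 < lam := div_pos (harm_pos hq1) (harm_pos hp1)
  have hmu0 : 0 < mu := div_pos (harm_pos hq2) (harm_pos hp2)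
  set y1 := lam • y with hy1def
  set y2 := (harm m / ‖y‖) • y with hy2def
  set z2 := (harm m / ‖z‖) • z with hz2def
  set z1 := mu • z with hz1def
  set U := ‖‖y‖⁻¹ • y - ‖z‖⁻¹ • z‖ with hU
  set f : ℕ → EuclideanSpace ℝ (Fin s) := fun i =>
    if i = 0 then y else if i = 1 then y1 else if i = 2 then y2
    else if i = 3 then z2 else if i = 4 then z1 else z with hf
  have e0 : f 0 = y := by norm_num [hf]
  have e1 : f 1 = y1 := by norm_num [hf]
  have e2 : f 2 = y2 := by norm_num [hf]
  have e3 : f 3 = z2 := by norm_num [hf]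
  have e4 : f 4 = z1 := by norm_num [hf]
  have e5 : f 5 = z := by norm_num [hf]
  have hch := dPhi_le_chain 0 (phiStd s) hphi y z 5 f (by norm_num) e0 e5
  rw [Finset.sum_range_succ, Finset.sum_range_succ, Finset.sum_range_succ,
    Finset.sum_range_succ, Finset.sum_range_one] at hch
  norm_num [e0, e1, e2, e3, e4, e5] at hch
  -- norms of intermediate points
  have hny1 : ‖y1‖ = lam * ‖y‖ := by
    rw [hy1def, norm_smul, Real.norm_eq_abs, abs_of_pos hlam0]
  have hnz1 : ‖z1‖ = mu * ‖z‖ := by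
    rw [hz1def, norm_smul, Real.norm_eq_abs, abs_of_pos hmu0]
  have hny2 : ‖y2‖ = harm m := norm_sphere_pt s y hy hm1
  have hnz2 : ‖z2‖ = harm m := norm_sphere_pt s z hz hm1
  have hly : harm m - δ ≤ lam * ‖y‖ := by
    have := (abs_lt.mp habs1).1
    linarith
  have hlz : harm m - δ ≤ mu * ‖z‖ := by
    have := (abs_lt.mp habs2).1
    linarith
  -- individual bounds
  have b1 : deltaPhi 0 (phiStd s) y y1 ≤ 1 / (1 + ‖y‖) + 1 / harm m := by
    refine le_trans (deltaPhi_le_jump 0 (phiStd s) hphi y y1) ?_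
    simp only [dist_zero_left]
    have hray : phiStd s y y1 = 0 := phiStd_ray s y p1 q1 hp1 hq1
    have hb : 1 / (1 + ‖y1‖) ≤ 1 / harm m := by
      apply one_div_le_one_div_of_le hmp
      rw [hny1]
      linarith
    linarith
  have b2 : deltaPhi 0 (phiStd s) y1 y2 ≤ δ := by
    refine le_trans (deltaPhi_le_dist 0 (phiStd s) hphi y1 y2) ?_
    rw [dist_eq_norm, hy1def, hy2def, ← sub_smul, norm_smul, Real.norm_eq_abs]
    have key0 : (lam - harm m / ‖y‖) * ‖y‖ = lam * ‖y‖ - harm m := by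
      field_simp
    have key : |lam - harm m / ‖y‖| * ‖y‖ = |lam * ‖y‖ - harm m| := by
      symm
      rw [← key0, abs_mul, abs_of_pos hyn]
    rw [key]
    exact habs1.le
  have b3 : deltaPhi 0 (phiStd s) y2 z2 ≤ 1 / harm m + U + 1 / harm m := by
    refine le_trans (deltaPhi_le_jump 0 (phiStd s) hphi y2 z2) ?_
    simp only [dist_zero_left]
    rw [hny2, hnz2]
    have hb : 1 / (1 + harm m) ≤ 1 / harm m := by
      apply one_div_le_one_div_of_le hmp
      linarith
    have hsp := phiStd_sphere_le s y z hy hz hm1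
    rw [← hy2def, ← hz2def, ← hU] at hsp
    linarith
  have b4 : deltaPhi 0 (phiStd s) z2 z1 ≤ δ := by
    refine le_trans (deltaPhi_le_dist 0 (phiStd s) hphi z2 z1) ?_
    rw [dist_eq_norm, hz1def, hz2def, ← sub_smul, norm_smul, Real.norm_eq_abs]
    have key0 : (harm m / ‖z‖ - mu) * ‖z‖ = harm m - mu * ‖z‖ := by
      field_simp
    have key : |harm m / ‖z‖ - mu| * ‖z‖ = |mu * ‖z‖ - harm m| := by
      symm
      rw [← abs_neg, neg_sub, ← key0, abs_mul, abs_of_pos hzn]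
    rw [key]
    exact habs2.le
  have b5 : deltaPhi 0 (phiStd s) z1 z ≤ 1 / harm m + 1 / (1 + ‖z‖) := by
    refine le_trans (deltaPhi_le_jump 0 (phiStd s) hphi z1 z) ?_
    simp only [dist_zero_left]
    have hray : phiStd s z1 z = 0 := phiStd_ray2 s z p2 q2 hp2 hq2
    have hb : 1 / (1 + ‖z1‖) ≤ 1 / harm m := by
      apply one_div_le_one_div_of_le hmp
      rw [hnz1]
      linarith
    linarith
  -- smallness of error terms
  have h8 : 8 < harm m * ε := (div_lt_iff₀ hε).mp hmB
  have hinv : 1 / harm m < ε / 8 := by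
    rw [div_lt_div_iff₀ hmp (by norm_num : (0:ℝ) < 8)]
    nlinarith
  linarith [b1, b2, b3, b4, b5, hch, hinv, hδε]
end upper


section mainsec

variable {V : Type*} [NormedAddCommGroup V] [NormedSpace ℝ V]

lemma unit_Phi (x : V) (hx : x ≠ 0) : ‖Phi x‖⁻¹ • Phi x = ‖x‖⁻¹ • x := by
  have hx0 : (0:ℝ) < ‖x‖ := norm_pos_iff.mpr hx
  rw [norm_Phi, Phi, smul_smul]
  congr 1
  rw [div_eq_mul_inv, mul_inv, inv_inv]
  field_simp

lemma Phi_zero : (Phi (0 : V)) = 0 := by simp [Phi]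

end mainsec

end StdCpt

open Filter StdCpt in
/-- main theorem -/
theorem stmt12 (s : ℕ) (hs : 2 ≤ s) (u : ℕ → EuclideanSpace ℝ (Fin s))
    (hcauchy : ∀ ε > (0 : ℝ), ∃ N : ℕ, ∀ i ≥ N, ∀ j ≥ N,
      dPhi (0 : EuclideanSpace ℝ (Fin s)) (phiStd s) (u i) (u j) < ε)
    (hnconst : ¬ ∃ c : EuclideanSpace ℝ (Fin s),
      Filter.Tendsto (fun i => dPhi (0 : EuclideanSpace ℝ (Fin s)) (phiStd s) (u i) c)
        Filter.atTop (nhds 0)) :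
    ∃ x : EuclideanSpace ℝ (Fin s), ‖x‖ = 1 ∧
      Filter.Tendsto (fun i => dPhi (0 : EuclideanSpace ℝ (Fin s)) (phiStd s) (u i) (harm i • x))
        Filter.atTop (nhds 0) := by
  classical
  have hphi := phiStd_nonneg s
  have hC : CauchySeq (fun i => Phi (u i)) := by
    rw [Metric.cauchySeq_iff]
    intro ε hε
    obtain ⟨N, hN⟩ := hcauchy (ε / 3) (by positivity)
    refine ⟨N, fun i hi j hj => ?_⟩
    have h1 := Phi_dist_le_dPhi s (u i) (u j)
    have h2 := hN i hi j hj
    linarith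
  obtain ⟨L, hL⟩ := cauchySeq_tendsto_of_complete hC
  have hnorm : Tendsto (fun i => ‖Phi (u i)‖) atTop (nhds ‖L‖) := hL.norm
  have hLle : ‖L‖ ≤ 1 :=
    le_of_tendsto hnorm (Filter.Eventually.of_forall fun i => (norm_Phi_lt_one (u i)).le)
  rcases lt_or_eq_of_le hLle with hlt | heq
  · -- converges to a point: contradiction with hnconst
    exfalso
    apply hnconst
    set c : ℝ := (1 - ‖L‖) / 2 with hcdef
    have hc0 : 0 < c := by
      rw [hcdef]; linarith
    have hev : ∀ᶠ i in atTop, 1 + ‖u i‖ < 1 / c := by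
      have ht : Tendsto (fun i => 1 - ‖Phi (u i)‖) atTop (nhds (1 - ‖L‖)) :=
        tendsto_const_nhds.sub hnorm
      have h2 : ∀ᶠ i in atTop, c < 1 - ‖Phi (u i)‖ :=
        ht.eventually (eventually_gt_nhds (by rw [hcdef]; linarith))
      filter_upwards [h2] with i hi
      rw [one_sub_norm_Phi (u i)] at hi
      rw [lt_div_iff₀ hc0]
      rw [lt_div_iff₀ (onp (u i))] at hi
      linarith [mul_comm c (1 + ‖u i‖)] 
    obtain ⟨N0, hN0⟩ := eventually_atTop.mp hev
    have hCu : CauchySeq u := by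
      rw [Metric.cauchySeq_iff]
      intro ε hε
      obtain ⟨N1, hN1⟩ := hcauchy (ε * c * c / 7) (by positivity)
      refine ⟨max N0 N1, fun i hi j hj => ?_⟩
      have hi0 : N0 ≤ i := le_trans (le_max_left _ _) hi
      have hj0 : N0 ≤ j := le_trans (le_max_left _ _) hj
      have hi1 : N1 ≤ i := le_trans (le_max_right _ _) hi
      have hj1 : N1 ≤ j := le_trans (le_max_right _ _) hj
      have hb1 := hN0 i hi0
      have hb2 := hN0 j hj0
      have hd := hN1 i hi1 j hj1
      have hd0 := dPhi_nonneg 0 (phiStd s) hphi (u i) (u j)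
      have key : ‖Phi (u i) - Phi (u j)‖ ≤ 2 * dPhi 0 (phiStd s) (u i) (u j) := by
        have := Phi_dist_le_dPhi s (u i) (u j)
        rwa [dist_eq_norm] at this
      have hrev := Phi_rev (u i) (u j)
      have hc1 : (0:ℝ) < 1 + ‖u i‖ := onp _
      have hc2 : (0:ℝ) < 1 + ‖u j‖ := onp _
      calc dist (u i) (u j) = ‖u i - u j‖ := dist_eq_norm _ _
        _ ≤ 3 * ((1 + ‖u i‖) * (1 + ‖u j‖)) * ‖Phi (u i) - Phi (u j)‖ := hrev
        _ ≤ 3 * ((1 / c) * (1 / c)) * (2 * dPhi 0 (phiStd s) (u i) (u j)) := by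
            gcongr
            all_goals first | exact hb1.le | exact hb2.le | exact key
        _ ≤ 3 * ((1 / c) * (1 / c)) * (2 * (ε * c * c / 7)) := by
            gcongr
            all_goals exact hd.le
        _ = 6 * ε / 7 := by
            field_simp
            ring
        _ < ε := by linarith
    obtain ⟨c₀, hc₀⟩ := cauchySeq_tendsto_of_complete hCu
    refine ⟨c₀, squeeze_zero (fun i => dPhi_nonneg 0 (phiStd s) hphi (u i) c₀)
      (fun i => dPhi_le_dist 0 (phiStd s) hphi (u i) c₀) ?_⟩
    exact tendsto_iff_dist_tendsto_zero.mp hc₀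
  · -- at infinity case
    refine ⟨L, heq, ?_⟩
    have hLn0 : ‖L‖ ≠ 0 := by rw [heq]; norm_num
    have hev2 : ∀ᶠ i in atTop, (1:ℝ)/2 < ‖Phi (u i)‖ :=
      hnorm.eventually (eventually_gt_nhds (by rw [heq]; norm_num))
    -- limit of bound
    have t1 : Tendsto (fun i => 1 - ‖Phi (u i)‖) atTop (nhds 0) := by
      have h0 : Tendsto (fun i => 1 - ‖Phi (u i)‖) atTop (nhds (1 - ‖L‖)) :=
        tendsto_const_nhds.sub hnorm
      rw [heq] at h0
      simpa using h0
    have t2 : Tendsto (fun i => 1 / (1 + harm i)) atTop (nhds 0) := by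
      have h1 : Tendsto (fun i => 1 + harm i) atTop atTop :=
        tendsto_atTop_add_const_left _ 1 harm_tendsto
      simpa [one_div, Pi.inv_def] using h1.inv_tendsto_atTop
    have t3 : Tendsto (fun i => ‖‖Phi (u i)‖⁻¹ • Phi (u i) - L‖) atTop (nhds 0) := by
      have hinv : Tendsto (fun i => ‖Phi (u i)‖⁻¹) atTop (nhds ‖L‖⁻¹) := hnorm.inv₀ hLn0
      have hsmul : Tendsto (fun i => ‖Phi (u i)‖⁻¹ • Phi (u i)) atTop (nhds (‖L‖⁻¹ • L)) :=
        hinv.smul hL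
      have h0 : Tendsto (fun i => ‖‖Phi (u i)‖⁻¹ • Phi (u i) - L‖) atTop
          (nhds ‖‖L‖⁻¹ • L - L‖) := (hsmul.sub tendsto_const_nhds).norm
      rw [heq] at h0
      simpa using h0
    have tB : Tendsto (fun i => (1 - ‖Phi (u i)‖) + 1 / (1 + harm i)
        + ‖‖Phi (u i)‖⁻¹ • Phi (u i) - L‖) atTop (nhds 0) := by
      have := (t1.add t2).add t3
      simpa using this
    apply squeeze_zero' (Filter.Eventually.of_forall fun i =>
      dPhi_nonneg 0 (phiStd s) hphi (u i) (harm i • L)) ?_ tB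
    filter_upwards [hev2, eventually_ge_atTop 1] with i hi2 hi1
    -- u i ≠ 0
    have hu0 : u i ≠ 0 := by
      intro h
      rw [h, Phi_zero, norm_zero] at hi2
      linarith
    have hhp : (0:ℝ) < harm i := harm_pos hi1
    have hz0 : harm i • L ≠ 0 := by
      intro h
      have : ‖harm i • L‖ = 0 := by rw [h, norm_zero]
      rw [norm_smul, Real.norm_eq_abs, abs_of_pos hhp, heq, mul_one] at this
      linarith
    have hb := dPhi_le_bound s (u i) (harm i • L) hu0 hz0
    have hnz : ‖harm i • L‖ = harm i := by
      rw [norm_smul, Real.norm_eq_abs, abs_of_pos hhp, heq, mul_one]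
    have hunit : ‖harm i • L‖⁻¹ • (harm i • L) = L := by
      rw [hnz, smul_smul, inv_mul_cancel₀ hhp.ne', one_smul]
    rw [hunit] at hb
    rw [hnz] at hb
    rw [one_sub_norm_Phi (u i), unit_Phi (u i) hu0]
    exact hb
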